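/- Under the rule WPS^H (the weighted proportional sharing rule with weights w_i = H_i), let T^h be a Nash equilibrium that is pointwise least among all Nash equilibria. Then: for every retailer i ∈ U, if T^h_i = 2·T^c_i, then T^c_i = min_{j∈N} T^c_j and √s/√2 ≤ T^c_i < √s; and for every retailer i ∈ V, if T^h_i = 2·T^c_i, then √(K_i/H_i)/√2 ≤ T^c_i < √(K_i/H_i). -/

import Mathlib

open Finset

noncomputable section

/-- `t` is a power-of-two (POT) value with base period `B`. -/
def IsPOT (B t : ℝ) : Prop := ∃ z : ℤ, t = (2 : ℝ) ^ z * B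

/-- Membership of an interval `t` in retailer `i`'s strategy set `Γ_i`,
given major setup cost `K0`, minor setup cost `Ki` and holding parameter `Hi`. -/
def InStrategy (B K0 Ki Hi t : ℝ) : Prop :=
  IsPOT B t ∧ Real.sqrt (Ki / (2 * Hi)) ≤ t ∧ t ≤ Real.sqrt (2 * (K0 + Ki) / Hi)

/-- `N[τ; T_{-i}] = {i} ∪ {j : T j ≤ τ}`. -/
def grp {n : ℕ} (T : Fin n → ℝ) (i : Fin n) (τ : ℝ) : Finset (Fin n) :=
  insert i (Finset.univ.filter fun j => T j ≤ τ)

/-- The set of levels `L(T) = {T j : j ∈ N}`. -/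
def levels {n : ℕ} (T : Fin n → ℝ) : Finset ℝ := Finset.image T Finset.univ

/-- `1/τ⁺`: the inverse of the smallest level larger than `τ`, with the
convention that it is `0` when no larger level exists. -/
def invSucc (L : Finset ℝ) (τ : ℝ) : ℝ :=
  if h : (L.filter fun u => τ < u).Nonempty then 1 / (L.filter fun u => τ < u).min' h
  else 0

/-- Major-setup share `x_i(T)` of retailer `i` under the weighted proportional
sharing rule with weights `w` (intended for strictly positive weights). -/
def share {n : ℕ} (K0 : ℝ) (w T : Fin n → ℝ) (i : Fin n) : ℝ :=
  ∑ τ ∈ (levels T).filter (fun τ => T i ≤ τ),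
    (1 / τ - invSucc (levels T) τ) *
      (w i / ∑ j ∈ Finset.univ.filter (fun j => T j ≤ τ), w j) * K0

/-- Major-setup share for nonnegative weights: if the order group has total
weight zero, the major setup cost is split equally among its members. -/
def shareZ {n : ℕ} (K0 : ℝ) (w T : Fin n → ℝ) (i : Fin n) : ℝ :=
  ∑ τ ∈ (levels T).filter (fun τ => T i ≤ τ),
    (1 / τ - invSucc (levels T) τ) *
      (if 0 < ∑ j ∈ Finset.univ.filter (fun j => T j ≤ τ), w j
        then w i / ∑ j ∈ Finset.univ.filter (fun j => T j ≤ τ), w j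
        else 1 / ((Finset.univ.filter fun j => T j ≤ τ) : Finset (Fin n)).card) * K0

/-- Individual cost `f_i(T) = H_i T_i + K_i / T_i + x_i(T)` under `WPS^w`. -/
def indCost {n : ℕ} (K0 : ℝ) (K H w : Fin n → ℝ) (T : Fin n → ℝ) (i : Fin n) : ℝ :=
  H i * T i + K i / T i + share K0 w T i

/-- Individual cost under the zero-weight-tolerant sharing rule. -/
def indCostZ {n : ℕ} (K0 : ℝ) (K H w : Fin n → ℝ) (T : Fin n → ℝ) (i : Fin n) : ℝ :=
  H i * T i + K i / T i + shareZ K0 w T i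

/-- System cost `C(T)`. -/
def sysCost {n : ℕ} (K0 : ℝ) (K H : Fin n → ℝ) (T : Fin n → ℝ) : ℝ :=
  (∑ i, (H i * T i + K i / T i)) + K0 / (⨅ i, T i)

/-- Nash equilibrium of the game induced by `WPS^w`. -/
def IsNE {n : ℕ} (B K0 : ℝ) (K H w : Fin n → ℝ) (T : Fin n → ℝ) : Prop :=
  (∀ i, InStrategy B K0 (K i) (H i) (T i)) ∧
  ∀ i t, InStrategy B K0 (K i) (H i) t →
    indCost K0 K H w T i ≤ indCost K0 K H w (Function.update T i t) i

/-- Nash equilibrium for the zero-weight-tolerant sharing rule. -/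
def IsNEZ {n : ℕ} (B K0 : ℝ) (K H w : Fin n → ℝ) (T : Fin n → ℝ) : Prop :=
  (∀ i, InStrategy B K0 (K i) (H i) (T i)) ∧
  ∀ i t, InStrategy B K0 (K i) (H i) t →
    indCostZ K0 K H w T i ≤ indCostZ K0 K H w (Function.update T i t) i

/-- `s = min_{∅ ⊂ S ⊆ N} (K0 + Σ_{i∈S} K_i)/(Σ_{i∈S} H_i)`. -/
def sval (n : ℕ) (K0 : ℝ) (K H : Fin n → ℝ) : ℝ :=
  sInf ((fun S : Finset (Fin n) => (K0 + ∑ i ∈ S, K i) / ∑ i ∈ S, H i) '' {S | S.Nonempty})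

/-- `[b]_POT`: the POT value `a` with `b/√2 < a ≤ √2·b`. -/
def potRound (B b : ℝ) : ℝ := (2 : ℝ) ^ (round (Real.logb 2 (b / B))) * B

/-- The optimal centralized POT policy `T^c`. -/
def Tc (n : ℕ) (B K0 : ℝ) (K H : Fin n → ℝ) (i : Fin n) : ℝ :=
  if K i ≤ sval n K0 K H * H i then potRound B (Real.sqrt (sval n K0 K H))
  else potRound B (Real.sqrt (K i / H i))

end
noncomputable section
namespace JRP

open Finset

variable {n : ℕ}

/-- Total weight of the players ordering at or below `τ`. -/
def Wsum (w T : Fin n → ℝ) (τ : ℝ) : ℝ :=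
  ∑ k ∈ Finset.univ.filter (fun k => T k ≤ τ), w k

/-- Share computed over an arbitrary grid `L`. -/
def gridShare (K0 : ℝ) (w T : Fin n → ℝ) (i : Fin n) (L : Finset ℝ) : ℝ :=
  ∑ τ ∈ L.filter (fun τ => T i ≤ τ),
    (1 / τ - invSucc L τ) * (w i / Wsum w T τ) * K0

lemma share_eq_gridShare (K0 : ℝ) (w T : Fin n → ℝ) (i : Fin n) :
    share K0 w T i = gridShare K0 w T i (levels T) := rfl

lemma Ti_mem_levels (T : Fin n → ℝ) (i : Fin n) : T i ∈ levels T :=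
  Finset.mem_image_of_mem T (Finset.mem_univ i)

lemma min'_congr {s t : Finset ℝ} (h : s = t) (hs : s.Nonempty) :
    s.min' hs = t.min' (h ▸ hs) := by subst h; rfl

lemma invSucc_eq {L L' : Finset ℝ} {σ τ : ℝ}
    (h : L.filter (fun u => σ < u) = L'.filter (fun u => τ < u)) :
    invSucc L σ = invSucc L' τ := by
  unfold invSucc
  by_cases hne : (L.filter (fun u => σ < u)).Nonempty
  · have hne' : (L'.filter (fun u => τ < u)).Nonempty := h ▸ hne
    rw [dif_pos hne, dif_pos hne', min'_congr h hne]
  · have hne' : ¬ (L'.filter (fun u => τ < u)).Nonempty := h ▸ hne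
    rw [dif_neg hne, dif_neg hne']

lemma gridShare_insert (K0 : ℝ) (w T : Fin n → ℝ) (i : Fin n) (L : Finset ℝ)
    (hL : levels T ⊆ L) {a : ℝ} (ha : a ∉ L) :
    gridShare K0 w T i (insert a L) = gridShare K0 w T i L := by
  by_cases hia : T i ≤ a
  · have hTiL : T i ∈ L := hL (Ti_mem_levels T i)
    have hTia : T i < a := lt_of_le_of_ne hia (by rintro rfl; exact ha hTiL)
    set Lm := L.filter (fun u => u < a) with hLm
    have hmemLm : T i ∈ Lm := by simp [hLm, hTiL, hTia]
    have hne : Lm.Nonempty := ⟨T i, hmemLm⟩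
    set τ0 := Lm.max' hne with hτ0
    have hτ0m : τ0 ∈ Lm := Finset.max'_mem _ _
    have hτ0L : τ0 ∈ L := (Finset.mem_filter.1 hτ0m).1
    have hτ0a : τ0 < a := (Finset.mem_filter.1 hτ0m).2
    have hiτ0 : T i ≤ τ0 := Finset.le_max' _ _ hmemLm
    have key : ∀ u ∈ L, τ0 < u ↔ a < u := by
      intro u hu
      constructor
      · intro h
        by_contra hau
        push_neg at hau
        have hua : u < a := lt_of_le_of_ne hau (by rintro rfl; exact ha hu)
        exact absurd (Finset.le_max' _ u (by simp [hLm, hu, hua])) (not_le.2 h)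
      · intro h; exact lt_trans hτ0a h
    have fa : (insert a L).filter (fun u => a < u) = L.filter (fun u => τ0 < u) := by
      ext u
      simp only [Finset.mem_filter, Finset.mem_insert]
      constructor
      · rintro ⟨(rfl | hu), h2⟩
        · exact absurd h2 (lt_irrefl u)
        · exact ⟨hu, (key u hu).2 h2⟩
      · rintro ⟨hu, h2⟩; exact ⟨Or.inr hu, (key u hu).1 h2⟩
    have hiS_a : invSucc (insert a L) a = invSucc L τ0 := invSucc_eq fa
    have fτ0 : (insert a L).filter (fun u => τ0 < u)
        = insert a (L.filter (fun u => τ0 < u)) := by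
      rw [Finset.filter_insert, if_pos hτ0a]
    have hiS_τ0 : invSucc (insert a L) τ0 = 1 / a := by
      have hne2 : ((insert a L).filter (fun u => τ0 < u)).Nonempty := by
        rw [fτ0]; exact ⟨a, Finset.mem_insert_self _ _⟩
      rw [invSucc, dif_pos hne2]
      congr 1
      apply le_antisymm
      · apply Finset.min'_le; rw [fτ0]; exact Finset.mem_insert_self _ _
      · apply Finset.le_min'
        intro y hy
        rw [fτ0, Finset.mem_insert] at hy
        rcases hy with rfl | hy
        · exact le_refl _
        · have hy' := Finset.mem_filter.1 hy
          exact le_of_lt ((key y hy'.1).1 hy'.2)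
    have hW : Wsum w T a = Wsum w T τ0 := by
      unfold Wsum
      congr 1
      ext k
      simp only [Finset.mem_filter, Finset.mem_univ, true_and]
      constructor
      · intro hk
        have hkL : T k ∈ L := hL (Ti_mem_levels T k)
        have hlt : T k < a := lt_of_le_of_ne hk (by intro h; exact ha (h ▸ hkL))
        exact Finset.le_max' _ _ (by simp [hLm, hkL, hlt])
      · intro hk; exact le_trans hk (le_of_lt hτ0a)
    have huntouched : ∀ τ ∈ L, τ ≠ τ0 → T i ≤ τ →
        invSucc (insert a L) τ = invSucc L τ := by
      intro τ hτ hττ0 hiτ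
      rcases lt_or_gt_of_ne (show τ ≠ a by rintro rfl; exact ha hτ) with hlt | hgt
      · have hτLm : τ ∈ Lm := by simp [hLm, hτ, hlt]
        have hττ0' : τ < τ0 := lt_of_le_of_ne (Finset.le_max' _ _ hτLm) hττ0
        have hτ0F : τ0 ∈ L.filter (fun u => τ < u) := by
          simp [hτ0L, hττ0']
        have hne3 : (L.filter (fun u => τ < u)).Nonempty := ⟨τ0, hτ0F⟩
        have hfi : (insert a L).filter (fun u => τ < u)
            = insert a (L.filter (fun u => τ < u)) := by
          rw [Finset.filter_insert, if_pos hlt]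
        have hne4 : ((insert a L).filter (fun u => τ < u)).Nonempty := by
          rw [hfi]; exact ⟨a, Finset.mem_insert_self _ _⟩
        rw [invSucc, invSucc, dif_pos hne3, dif_pos hne4]
        congr 1
        rw [min'_congr hfi hne4]
        apply le_antisymm
        · exact Finset.min'_le _ _ (Finset.mem_insert_of_mem (Finset.min'_mem _ hne3))
        · rcases Finset.mem_insert.1
            (Finset.min'_mem (insert a (L.filter (fun u => τ < u))) (hfi ▸ hne4)) with h | h
          · rw [h]
            exact le_of_lt (lt_of_le_of_lt (Finset.min'_le _ _ hτ0F) hτ0a)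
          · exact Finset.min'_le _ _ h
      · apply invSucc_eq
        rw [Finset.filter_insert, if_neg (not_lt.2 (le_of_lt hgt))]
    have hfP : (insert a L).filter (fun τ => T i ≤ τ)
        = insert a (L.filter (fun τ => T i ≤ τ)) := by
      rw [Finset.filter_insert, if_pos hia]
    have haP : a ∉ L.filter (fun τ => T i ≤ τ) := fun h => ha (Finset.mem_filter.1 h).1
    have hτ0P : τ0 ∈ L.filter (fun τ => T i ≤ τ) := Finset.mem_filter.2 ⟨hτ0L, hiτ0⟩
    unfold gridShare
    rw [hfP, Finset.sum_insert haP,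
      ← Finset.add_sum_erase _ _ hτ0P, ← Finset.add_sum_erase _ _ hτ0P]
    have hrest : ∑ τ ∈ (L.filter (fun τ => T i ≤ τ)).erase τ0,
        (1 / τ - invSucc (insert a L) τ) * (w i / Wsum w T τ) * K0
        = ∑ τ ∈ (L.filter (fun τ => T i ≤ τ)).erase τ0,
        (1 / τ - invSucc L τ) * (w i / Wsum w T τ) * K0 := by
      apply Finset.sum_congr rfl
      intro τ hτ
      have h1 := Finset.mem_of_mem_erase hτ
      have h2 := Finset.ne_of_mem_erase hτ
      rw [huntouched τ (Finset.mem_filter.1 h1).1 h2 (Finset.mem_filter.1 h1).2]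
    rw [hrest, hiS_a, hiS_τ0, hW]
    ring
  · have hfP : (insert a L).filter (fun τ => T i ≤ τ)
        = L.filter (fun τ => T i ≤ τ) := by
      rw [Finset.filter_insert, if_neg hia]
    unfold gridShare
    rw [hfP]
    apply Finset.sum_congr rfl
    intro τ hτ
    have hiτ : T i ≤ τ := (Finset.mem_filter.1 hτ).2
    have hinv : invSucc (insert a L) τ = invSucc L τ := by
      apply invSucc_eq
      rw [Finset.filter_insert,
        if_neg (not_lt.2 (le_trans (le_of_lt (not_le.1 hia)) hiτ))]
    rw [hinv]

lemma gridShare_eq_share (K0 : ℝ) (w T : Fin n → ℝ) (i : Fin n) {L : Finset ℝ}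
    (hL : levels T ⊆ L) :
    gridShare K0 w T i L = share K0 w T i := by
  have key : ∀ E : Finset ℝ, gridShare K0 w T i (levels T ∪ E) = share K0 w T i := by
    intro E
    induction E using Finset.induction_on with
    | empty => rw [Finset.union_empty]; exact (share_eq_gridShare K0 w T i).symm
    | @insert a E hae ih =>
      rw [Finset.union_insert]
      by_cases hmem : a ∈ levels T ∪ E
      · rw [Finset.insert_eq_self.2 hmem]; exact ih
      · rw [gridShare_insert K0 w T i _ Finset.subset_union_left hmem]; exact ih
  have := key (L \ levels T)
  rwa [Finset.union_sdiff_of_subset hL] at this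

/-- Telescoping sum of the gap weights over a window `[t, u)` of the grid. -/
lemma telescope (L : Finset ℝ) (u : ℝ) (hu : u ∈ L) :
    ∀ m : ℕ, ∀ t : ℝ, t ∈ L → t ≤ u →
      (L.filter (fun τ => t ≤ τ ∧ τ < u)).card ≤ m →
      ∑ τ ∈ L.filter (fun τ => t ≤ τ ∧ τ < u), (1 / τ - invSucc L τ) = 1 / t - 1 / u := by
  intro m
  induction m with
  | zero =>
    intro t ht htu hc
    rcases eq_or_lt_of_le htu with rfl | hlt
    · have : L.filter (fun τ => t ≤ τ ∧ τ < t) = ∅ := by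
        apply Finset.filter_false_of_mem
        intro τ _ h
        exact absurd (lt_of_le_of_lt h.1 h.2) (lt_irrefl t)
      rw [this, Finset.sum_empty]; ring
    · exfalso
      have : t ∈ L.filter (fun τ => t ≤ τ ∧ τ < u) := by simp [ht, hlt]
      have := Finset.card_pos.2 ⟨t, this⟩
      omega
  | succ m ih =>
    intro t ht htu hc
    rcases eq_or_lt_of_le htu with rfl | hlt
    · have : L.filter (fun τ => t ≤ τ ∧ τ < t) = ∅ := by
        apply Finset.filter_false_of_mem
        intro τ _ h
        exact absurd (lt_of_le_of_lt h.1 h.2) (lt_irrefl t)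
      rw [this, Finset.sum_empty]; ring
    · set F := L.filter (fun v => t < v) with hF
      have hne : F.Nonempty := ⟨u, by simp [hF, hu, hlt]⟩
      set t1 := F.min' hne with ht1
      have ht1F : t1 ∈ F := Finset.min'_mem _ _
      have ht1L : t1 ∈ L := (Finset.mem_filter.1 ht1F).1
      have htt1 : t < t1 := (Finset.mem_filter.1 ht1F).2
      have ht1u : t1 ≤ u := Finset.min'_le _ _ (by simp [hF, hu, hlt])
      have hinv : invSucc L t = 1 / t1 := by rw [invSucc, dif_pos hne]
      have hsplit : L.filter (fun τ => t ≤ τ ∧ τ < u)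
          = insert t (L.filter (fun τ => t1 ≤ τ ∧ τ < u)) := by
        ext τ
        simp only [Finset.mem_filter, Finset.mem_insert]
        constructor
        · rintro ⟨hτL, hτ1, hτ2⟩
          rcases eq_or_lt_of_le hτ1 with rfl | hτgt
          · exact Or.inl rfl
          · exact Or.inr ⟨hτL, Finset.min'_le _ _ (by simp [hF, hτL, hτgt]), hτ2⟩
        · rintro (rfl | ⟨hτL, hτ1, hτ2⟩)
          · exact ⟨ht, le_refl _, hlt⟩
          · exact ⟨hτL, le_trans (le_of_lt htt1) hτ1, hτ2⟩
      have hnotmem : t ∉ L.filter (fun τ => t1 ≤ τ ∧ τ < u) := by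
        intro hmem
        exact absurd (lt_of_lt_of_le htt1 (Finset.mem_filter.1 hmem).2.1) (lt_irrefl t)
      have hcard : (L.filter (fun τ => t1 ≤ τ ∧ τ < u)).card ≤ m := by
        have h1 : (L.filter (fun τ => t ≤ τ ∧ τ < u)).card
            = (L.filter (fun τ => t1 ≤ τ ∧ τ < u)).card + 1 := by
          rw [hsplit, Finset.card_insert_of_notMem hnotmem]
        omega
      rw [hsplit, Finset.sum_insert hnotmem, ih t1 ht1L ht1u hcard, hinv]
      ring

end JRP
end
noncomputable section
namespace JRP

open Finset

variable {n : ℕ}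

lemma gap_nonneg (L : Finset ℝ) {τ : ℝ} (hτ : 0 < τ) : 0 ≤ 1 / τ - invSucc L τ := by
  rw [invSucc]
  split_ifs with h
  · have hm := Finset.min'_mem _ h
    have h1 : τ < (L.filter (fun u => τ < u)).min' h := (Finset.mem_filter.1 hm).2
    have h2 := one_div_le_one_div_of_le hτ (le_of_lt h1)
    linarith
  · have : 0 ≤ 1 / τ := by positivity
    linarith

lemma Wsum_le_point {w : Fin n → ℝ} (hw : ∀ k, 0 < w k) {T : Fin n → ℝ} {j : Fin n}
    {τ : ℝ} (h : T j ≤ τ) : w j ≤ Wsum w T τ :=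
  Finset.single_le_sum (fun k _ => le_of_lt (hw k))
    (Finset.mem_filter.2 ⟨Finset.mem_univ j, h⟩)

lemma Wsum_mono {w : Fin n → ℝ} (hw : ∀ k, 0 < w k) {T : Fin n → ℝ} {σ τ : ℝ}
    (h : σ ≤ τ) : Wsum w T σ ≤ Wsum w T τ :=
  Finset.sum_le_sum_of_subset_of_nonneg
    (Finset.monotone_filter_right _ (fun k _ hk => le_trans hk h))
    (fun k _ _ => le_of_lt (hw k))

lemma Wsum_anti {w : Fin n → ℝ} (hw : ∀ k, 0 < w k) {T T' : Fin n → ℝ}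
    (h : ∀ k, T' k ≤ T k) (τ : ℝ) : Wsum w T τ ≤ Wsum w T' τ :=
  Finset.sum_le_sum_of_subset_of_nonneg
    (Finset.monotone_filter_right _ (fun k _ hk => le_trans (h k) hk))
    (fun k _ _ => le_of_lt (hw k))

lemma levels_update_subset (Q : Fin n → ℝ) (j : Fin n) (t : ℝ) {L : Finset ℝ}
    (ht : t ∈ L) (hQ : ∀ k, k ≠ j → Q k ∈ L) : levels (Function.update Q j t) ⊆ L := by
  intro x hx
  rw [levels, Finset.mem_image] at hx
  obtain ⟨k, -, rfl⟩ := hx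
  by_cases hk : k = j
  · subst hk; rw [Function.update_self]; exact ht
  · rw [Function.update_of_ne hk]; exact hQ k hk

/-- Master difference formula: the difference of `j`'s shares at own intervals
`t ≤ u` (others fixed) is a window sum over any valid grid. -/
lemma share_diff (K0 : ℝ) (w Q : Fin n → ℝ) (j : Fin n) {t u : ℝ} (htu : t ≤ u)
    {L : Finset ℝ} (htL : t ∈ L) (huL : u ∈ L) (hQL : ∀ k, k ≠ j → Q k ∈ L) :
    share K0 w (Function.update Q j t) j - share K0 w (Function.update Q j u) j
      = ∑ τ ∈ L.filter (fun τ => t ≤ τ ∧ τ < u),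
          (1 / τ - invSucc L τ) * (w j / Wsum w (Function.update Q j t) τ) * K0 := by
  rw [← gridShare_eq_share K0 w _ j (levels_update_subset Q j t htL hQL),
      ← gridShare_eq_share K0 w _ j (levels_update_subset Q j u huL hQL)]
  unfold gridShare
  simp only [Function.update_self]
  have hsplit : L.filter (fun τ => t ≤ τ) =
      (L.filter (fun τ => t ≤ τ ∧ τ < u)) ∪ (L.filter (fun τ => u ≤ τ)) := by
    ext τ; simp only [Finset.mem_filter, Finset.mem_union]
    constructor
    · rintro ⟨h1, h2⟩
      rcases lt_or_ge τ u with h | h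
      · exact Or.inl ⟨h1, h2, h⟩
      · exact Or.inr ⟨h1, h⟩
    · rintro (⟨h1, h2, -⟩ | ⟨h1, h2⟩)
      · exact ⟨h1, h2⟩
      · exact ⟨h1, le_trans htu h2⟩
  have hdisj : Disjoint (L.filter (fun τ => t ≤ τ ∧ τ < u))
      (L.filter (fun τ => u ≤ τ)) := by
    rw [Finset.disjoint_left]
    intro τ h1 h2
    have ha := (Finset.mem_filter.1 h1).2.2
    have hb := (Finset.mem_filter.1 h2).2
    linarith
  rw [hsplit, Finset.sum_union hdisj]
  have hcommon : ∑ τ ∈ L.filter (fun τ => u ≤ τ),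
      (1 / τ - invSucc L τ) * (w j / Wsum w (Function.update Q j t) τ) * K0
    = ∑ τ ∈ L.filter (fun τ => u ≤ τ),
      (1 / τ - invSucc L τ) * (w j / Wsum w (Function.update Q j u) τ) * K0 := by
    apply Finset.sum_congr rfl
    intro τ hτ
    have huτ : u ≤ τ := (Finset.mem_filter.1 hτ).2
    have hWeq : Wsum w (Function.update Q j t) τ = Wsum w (Function.update Q j u) τ := by
      unfold Wsum
      congr 1
      ext k
      simp only [Finset.mem_filter, Finset.mem_univ, true_and]
      by_cases hk : k = j
      · subst hk
        rw [Function.update_self, Function.update_self]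
        exact iff_of_true (le_trans htu huτ) huτ
      · rw [Function.update_of_ne hk, Function.update_of_ne hk]
    rw [hWeq]
  rw [hcommon]
  ring

lemma share_diff_nonneg (K0 : ℝ) {w : Fin n → ℝ} (hK0 : 0 ≤ K0) (hw : ∀ k, 0 < w k)
    (Q : Fin n → ℝ) (j : Fin n) {t u : ℝ} (ht : 0 < t) (htu : t ≤ u) :
    0 ≤ share K0 w (Function.update Q j t) j - share K0 w (Function.update Q j u) j := by
  set L := insert t (insert u (Finset.image Q Finset.univ)) with hL
  have htL : t ∈ L := Finset.mem_insert_self _ _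
  have huL : u ∈ L := by simp [hL]
  have hQL : ∀ k, k ≠ j → Q k ∈ L := by
    intro k _
    simp only [hL, Finset.mem_insert]
    exact Or.inr (Or.inr (Finset.mem_image_of_mem _ (Finset.mem_univ k)))
  rw [share_diff K0 w Q j htu htL huL hQL]
  apply Finset.sum_nonneg
  intro τ hτ
  have hτt : t ≤ τ := (Finset.mem_filter.1 hτ).2.1
  have hτpos : 0 < τ := lt_of_lt_of_le ht hτt
  have hgap := gap_nonneg L hτpos
  have hWpos : 0 < Wsum w (Function.update Q j t) τ :=
    lt_of_lt_of_le (hw j) (Wsum_le_point hw (by rw [Function.update_self]; exact hτt))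
  have hdiv : 0 ≤ w j / Wsum w (Function.update Q j t) τ :=
    div_nonneg (le_of_lt (hw j)) (le_of_lt hWpos)
  exact mul_nonneg (mul_nonneg hgap hdiv) hK0

lemma share_diff_le (K0 : ℝ) {w : Fin n → ℝ} (hK0 : 0 ≤ K0) (hw : ∀ k, 0 < w k)
    (Q : Fin n → ℝ) (j : Fin n) {t u : ℝ} (ht : 0 < t) (htu : t ≤ u) :
    share K0 w (Function.update Q j t) j - share K0 w (Function.update Q j u) j
      ≤ w j / Wsum w (Function.update Q j t) t * K0 * (1 / t - 1 / u) := by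
  set L := insert t (insert u (Finset.image Q Finset.univ)) with hL
  have htL : t ∈ L := Finset.mem_insert_self _ _
  have huL : u ∈ L := by simp [hL]
  have hQL : ∀ k, k ≠ j → Q k ∈ L := by
    intro k _
    simp only [hL, Finset.mem_insert]
    exact Or.inr (Or.inr (Finset.mem_image_of_mem _ (Finset.mem_univ k)))
  rw [share_diff K0 w Q j htu htL huL hQL]
  set W0 := Wsum w (Function.update Q j t) t with hW0
  have hW0pos : 0 < W0 :=
    lt_of_lt_of_le (hw j) (Wsum_le_point hw (by rw [Function.update_self]))
  have hstep : ∀ τ ∈ L.filter (fun τ => t ≤ τ ∧ τ < u),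
      (1 / τ - invSucc L τ) * (w j / Wsum w (Function.update Q j t) τ) * K0
        ≤ (1 / τ - invSucc L τ) * ((w j / W0) * K0) := by
    intro τ hτ
    have hτt : t ≤ τ := (Finset.mem_filter.1 hτ).2.1
    have hτpos : 0 < τ := lt_of_lt_of_le ht hτt
    have hgap := gap_nonneg L hτpos
    have hWle : W0 ≤ Wsum w (Function.update Q j t) τ := Wsum_mono hw hτt
    rw [mul_assoc]
    apply mul_le_mul_of_nonneg_left _ hgap
    apply mul_le_mul_of_nonneg_right _ hK0
    exact div_le_div_of_nonneg_left (le_of_lt (hw j)) hW0pos hWle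
  calc ∑ τ ∈ L.filter (fun τ => t ≤ τ ∧ τ < u),
        (1 / τ - invSucc L τ) * (w j / Wsum w (Function.update Q j t) τ) * K0
      ≤ ∑ τ ∈ L.filter (fun τ => t ≤ τ ∧ τ < u),
        (1 / τ - invSucc L τ) * ((w j / W0) * K0) := Finset.sum_le_sum hstep
    _ = (∑ τ ∈ L.filter (fun τ => t ≤ τ ∧ τ < u), (1 / τ - invSucc L τ))
          * ((w j / W0) * K0) := by rw [Finset.sum_mul]
    _ = (1 / t - 1 / u) * ((w j / W0) * K0) := by
          rw [telescope L u huL _ t htL htu le_rfl]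
    _ = w j / W0 * K0 * (1 / t - 1 / u) := by ring

lemma share_diff_exact (K0 : ℝ) {w : Fin n → ℝ} (hw : ∀ k, 0 < w k)
    (Q : Fin n → ℝ) (j : Fin n) {t u : ℝ} (ht : 0 < t) (htu : t ≤ u)
    (hfar : ∀ k, k ≠ j → u ≤ Q k) :
    share K0 w (Function.update Q j t) j - share K0 w (Function.update Q j u) j
      = K0 * (1 / t - 1 / u) := by
  set L := insert t (insert u (Finset.image Q Finset.univ)) with hL
  have htL : t ∈ L := Finset.mem_insert_self _ _
  have huL : u ∈ L := by simp [hL]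
  have hQL : ∀ k, k ≠ j → Q k ∈ L := by
    intro k _
    simp only [hL, Finset.mem_insert]
    exact Or.inr (Or.inr (Finset.mem_image_of_mem _ (Finset.mem_univ k)))
  rw [share_diff K0 w Q j htu htL huL hQL]
  have hstep : ∀ τ ∈ L.filter (fun τ => t ≤ τ ∧ τ < u),
      (1 / τ - invSucc L τ) * (w j / Wsum w (Function.update Q j t) τ) * K0
        = (1 / τ - invSucc L τ) * K0 := by
    intro τ hτ
    have hτt : t ≤ τ := (Finset.mem_filter.1 hτ).2.1
    have hτu : τ < u := (Finset.mem_filter.1 hτ).2.2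
    have hWeq : Wsum w (Function.update Q j t) τ = w j := by
      unfold Wsum
      have hfilter : Finset.univ.filter (fun k => Function.update Q j t k ≤ τ) = {j} := by
        ext k
        simp only [Finset.mem_filter, Finset.mem_univ, true_and, Finset.mem_singleton]
        by_cases hk : k = j
        · subst hk; rw [Function.update_self]; exact iff_of_true hτt rfl
        · rw [Function.update_of_ne hk]
          constructor
          · intro hle
            exact absurd (lt_of_le_of_lt (le_trans (hfar k hk) hle) hτu) (lt_irrefl u)
          · intro h; exact absurd h hk
      rw [hfilter, Finset.sum_singleton]
    rw [hWeq, div_self (ne_of_gt (hw j)), mul_one]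
  rw [Finset.sum_congr rfl hstep, ← Finset.sum_mul,
    telescope L u huL _ t htL htu le_rfl]
  ring

lemma share_diff_mono (K0 : ℝ) {w : Fin n → ℝ} (hK0 : 0 ≤ K0) (hw : ∀ k, 0 < w k)
    (Q Q' : Fin n → ℝ) (j : Fin n) (hle : ∀ k, Q' k ≤ Q k)
    {t u : ℝ} (ht : 0 < t) (htu : t ≤ u) :
    share K0 w (Function.update Q' j t) j - share K0 w (Function.update Q' j u) j
      ≤ share K0 w (Function.update Q j t) j - share K0 w (Function.update Q j u) j := by
  set L := insert t (insert u ((Finset.image Q Finset.univ) ∪ (Finset.image Q' Finset.univ)))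
    with hL
  have htL : t ∈ L := Finset.mem_insert_self _ _
  have huL : u ∈ L := by simp [hL]
  have hQL : ∀ k, k ≠ j → Q k ∈ L := by
    intro k _
    simp only [hL, Finset.mem_insert, Finset.mem_union]
    exact Or.inr (Or.inr (Or.inl (Finset.mem_image_of_mem _ (Finset.mem_univ k))))
  have hQ'L : ∀ k, k ≠ j → Q' k ∈ L := by
    intro k _
    simp only [hL, Finset.mem_insert, Finset.mem_union]
    exact Or.inr (Or.inr (Or.inr (Finset.mem_image_of_mem _ (Finset.mem_univ k))))
  rw [share_diff K0 w Q j htu htL huL hQL, share_diff K0 w Q' j htu htL huL hQ'L]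
  apply Finset.sum_le_sum
  intro τ hτ
  have hτt : t ≤ τ := (Finset.mem_filter.1 hτ).2.1
  have hτpos : 0 < τ := lt_of_lt_of_le ht hτt
  have hgap := gap_nonneg L hτpos
  have hWle : Wsum w (Function.update Q j t) τ ≤ Wsum w (Function.update Q' j t) τ := by
    apply Wsum_anti hw
    intro k
    by_cases hk : k = j
    · subst hk; rw [Function.update_self, Function.update_self]
    · rw [Function.update_of_ne hk, Function.update_of_ne hk]; exact hle k
  have hWpos : 0 < Wsum w (Function.update Q j t) τ :=
    lt_of_lt_of_le (hw j) (Wsum_le_point hw (by rw [Function.update_self]; exact hτt))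
  rw [mul_assoc, mul_assoc]
  apply mul_le_mul_of_nonneg_left _ hgap
  apply mul_le_mul_of_nonneg_right _ hK0
  exact div_le_div_of_nonneg_left (le_of_lt (hw j)) hWpos hWle

end JRP
end
noncomputable section
namespace JRP

open Finset

variable {n : ℕ}

lemma indCost_update (K0 : ℝ) (K H w : Fin n → ℝ) (P : Fin n → ℝ) (j : Fin n) (t : ℝ) :
    indCost K0 K H w (Function.update P j t) j
      = H j * t + K j / t + share K0 w (Function.update P j t) j := by
  rw [indCost, Function.update_self]

/-- Preference transport: if `j` weakly prefers the smaller interval `t` to `u`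
at profile `P`, this is preserved when the others' intervals shrink. -/
lemma pref_mono (K0 : ℝ) (K H : Fin n → ℝ) (hK0 : 0 ≤ K0) (hH : ∀ k, 0 < H k)
    {P P' : Fin n → ℝ} (j : Fin n) (hle : ∀ k, P' k ≤ P k)
    {t u : ℝ} (ht : 0 < t) (htu : t ≤ u)
    (h : indCost K0 K H H (Function.update P j t) j
          ≤ indCost K0 K H H (Function.update P j u) j) :
    indCost K0 K H H (Function.update P' j t) j
      ≤ indCost K0 K H H (Function.update P' j u) j := by
  simp only [indCost_update] at h ⊢
  have := share_diff_mono K0 hK0 hH P P' j hle ht htu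
  linarith

/-- Upward stability: nobody with `2 H_j P_j² ≥ K_j + K_0 H_j / W(P_j)` wants to
deviate to a higher interval. -/
lemma up_stable (K0 : ℝ) (K H : Fin n → ℝ) (hK0 : 0 < K0) (hH : ∀ k, 0 < H k)
    (hKj : ∀ k, 0 ≤ K k) (P : Fin n → ℝ) (j : Fin n) (hP : ∀ k, 0 < P k)
    {u : ℝ} (hu : 2 * P j ≤ u)
    (hcond : K j + K0 * H j / Wsum H P (P j) ≤ 2 * H j * (P j) ^ 2) :
    indCost K0 K H H P j ≤ indCost K0 K H H (Function.update P j u) j := by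
  have hPj : 0 < P j := hP j
  have hupd : Function.update P j (P j) = P := Function.update_eq_self j P
  have htu : P j ≤ u := le_trans (by linarith) hu
  set W := Wsum H P (P j) with hW
  have hWj : H j ≤ W := Wsum_le_point hH (le_refl (P j))
  have hWpos : 0 < W := lt_of_lt_of_le (hH j) hWj
  have hdiff := share_diff_le K0 (le_of_lt hK0) hH P j hPj htu
  rw [hupd] at hdiff
  -- hdiff : share P j - share (update P j u) j ≤ H j / W * K0 * (1/P j - 1/u)
  have hgoal : indCost K0 K H H P j - indCost K0 K H H (Function.update P j u) j ≤ 0 := by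
    have e1 : indCost K0 K H H P j = H j * P j + K j / P j + share K0 H P j := rfl
    rw [e1, indCost_update]
    have hupos : 0 < u := lt_of_lt_of_le hPj htu
    set c : ℝ := K j + K0 * H j / W with hc
    have hcle : c ≤ 2 * H j * (P j) ^ 2 := hcond
    have hc2 : c ≤ H j * (P j * u) := by
      have hmul : (H j * P j) * (2 * P j) ≤ (H j * P j) * u :=
        mul_le_mul_of_nonneg_left hu (le_of_lt (mul_pos (hH j) hPj))
      nlinarith
    have hfrac : 1 / P j - 1 / u = (u - P j) / (P j * u) := by
      field_simp
    have hsh : share K0 H P j - share K0 H (Function.update P j u) j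
        ≤ H j / W * K0 * (1 / P j - 1 / u) := hdiff
    have hWK : H j / W * K0 ≤ K0 * H j / W / 1 := by
      rw [div_one]; ring_nf; exact le_refl _
    -- combine
    have hx : 0 ≤ (u - P j) / (P j * u) := by
      apply div_nonneg (by linarith) (by positivity)
    have key : H j * P j - H j * u + c * ((u - P j) / (P j * u)) ≤ 0 := by
      have : c * ((u - P j) / (P j * u)) ≤ (H j * (P j * u)) * ((u - P j) / (P j * u)) :=
        mul_le_mul_of_nonneg_right hc2 hx
      have heq : (H j * (P j * u)) * ((u - P j) / (P j * u)) = H j * (u - P j) := by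
        field_simp
      rw [heq] at this
      linarith
    have expand : H j * P j + K j / P j + share K0 H P j
        - (H j * u + K j / u + share K0 H (Function.update P j u) j)
        = (H j * P j - H j * u) + K j * (1 / P j - 1 / u)
          + (share K0 H P j - share K0 H (Function.update P j u) j) := by
      field_simp
      ring
    rw [expand, hfrac]
    have hKju : K j * ((u - P j) / (P j * u)) + (K0 * H j / W) * ((u - P j) / (P j * u))
        = c * ((u - P j) / (P j * u)) := by rw [hc]; ring
    have hsh' : share K0 H P j - share K0 H (Function.update P j u) j
        ≤ (K0 * H j / W) * ((u - P j) / (P j * u)) := by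
      rw [hfrac] at hsh
      calc share K0 H P j - share K0 H (Function.update P j u) j
          ≤ H j / W * K0 * ((u - P j) / (P j * u)) := hsh
        _ = (K0 * H j / W) * ((u - P j) / (P j * u)) := by ring
    linarith
  linarith

/-- Descent at the floor: doubling a tiny interval strictly improves. -/
lemma floor_desc (K0 : ℝ) (K H : Fin n → ℝ) (hK0 : 0 < K0) (hH : ∀ k, 0 < H k)
    (hKj : ∀ k, 0 ≤ K k) (P : Fin n → ℝ) (j : Fin n) {t : ℝ} (ht : 0 < t)
    (hsep : ∀ k, k ≠ j → 2 * t ≤ P k) (hsmall : 2 * H j * t ^ 2 < K0) :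
    indCost K0 K H H (Function.update P j (2 * t)) j
      < indCost K0 K H H (Function.update P j t) j := by
  have h2t : t ≤ 2 * t := by linarith
  have hdiff := share_diff_exact K0 hH P j ht h2t hsep
  rw [indCost_update, indCost_update]
  have e : 1 / t - 1 / (2 * t) = 1 / (2 * t) := by
    field_simp
    ring
  rw [e] at hdiff
  -- goal : Hj * 2t + Kj/(2t) + share(2t) < Hj t + Kj/t + share(t)
  -- share(t) = share(2t) + K0/(2t)
  have hKt : K j / t - K j / (2 * t) = K j / (2 * t) := by
    field_simp
    ring
  have hK0t : 0 < K0 * (1 / (2 * t)) := by positivity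
  have hKnn : 0 ≤ K j / (2 * t) := div_nonneg (hKj j) (by positivity)
  have h5 : H j * t < K0 * (1 / (2 * t)) := by
    rw [mul_one_div, lt_div_iff₀ (by positivity : (0:ℝ) < 2 * t)]
    nlinarith
  linarith [hdiff, hKt, hKnn, h5]

/-! ### POT facts -/

lemma pot_pos {B t : ℝ} (hB : 0 < B) (h : IsPOT B t) : 0 < t := by
  obtain ⟨z, rfl⟩ := h
  positivity

lemma pot_double {B t : ℝ} (h : IsPOT B t) : IsPOT B (2 * t) := by
  obtain ⟨z, rfl⟩ := h
  exact ⟨z + 1, by rw [zpow_add₀ (by norm_num : (2:ℝ) ≠ 0)]; ring⟩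

lemma pot_step {B t u : ℝ} (hB : 0 < B) (ht : IsPOT B t) (hu : IsPOT B u)
    (h : t < u) : 2 * t ≤ u := by
  obtain ⟨a, rfl⟩ := ht
  obtain ⟨b, rfl⟩ := hu
  have hab : (2:ℝ) ^ a < 2 ^ b := by
    have := lt_of_mul_lt_mul_right h (le_of_lt hB)
    exact this
  have hab' : a < b := by
    by_contra hc
    push_neg at hc
    exact absurd hab (not_lt.2 (zpow_le_zpow_right₀ (by norm_num : (1:ℝ) ≤ 2) hc))
  have : a + 1 ≤ b := hab'
  have h2 : (2:ℝ) ^ (a + 1) ≤ 2 ^ b := zpow_le_zpow_right₀ (by norm_num : (1:ℝ) ≤ 2) this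
  rw [zpow_add₀ (by norm_num : (2:ℝ) ≠ 0)] at h2
  have := mul_le_mul_of_nonneg_right h2 (le_of_lt hB)
  calc 2 * (2 ^ a * B) = 2 ^ a * 2 ^ (1:ℤ) * B := by norm_num; ring
    _ ≤ 2 ^ b * B := this
  -- may need adjust

/-- There is a POT value in `(b/2, b]`. -/
lemma exists_pot_le {B b : ℝ} (hB : 0 < B) (hb : 0 < b) :
    ∃ m, IsPOT B m ∧ m ≤ b ∧ b < 2 * m := by
  set r := Real.logb 2 (b / B) with hr
  refine ⟨(2:ℝ) ^ (⌊r⌋) * B, ⟨⌊r⌋, rfl⟩, ?_, ?_⟩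
  · have h1 : ((⌊r⌋ : ℝ)) ≤ r := Int.floor_le r
    have h2 : (2:ℝ) ^ ((⌊r⌋ : ℝ)) ≤ (2:ℝ) ^ r :=
      Real.rpow_le_rpow_left_iff (by norm_num : (1:ℝ) < 2) |>.2 h1
    have h3 : (2:ℝ) ^ r = b / B := Real.rpow_logb (by norm_num) (by norm_num) (by positivity)
    rw [h3] at h2
    rw [← Real.rpow_intCast (2:ℝ) ⌊r⌋]
    calc (2:ℝ) ^ ((⌊r⌋:ℝ)) * B ≤ (b / B) * B := by
          apply mul_le_mul_of_nonneg_right h2 (le_of_lt hB)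
      _ = b := by field_simp
  · have h1 : r < (⌊r⌋ : ℝ) + 1 := Int.lt_floor_add_one r
    have h2 : (2:ℝ) ^ r < (2:ℝ) ^ ((⌊r⌋ : ℝ) + 1) :=
      Real.rpow_lt_rpow_left_iff (by norm_num : (1:ℝ) < 2) |>.2 h1
    have h3 : (2:ℝ) ^ r = b / B := Real.rpow_logb (by norm_num) (by norm_num) (by positivity)
    rw [h3] at h2
    have h4 : (2:ℝ) ^ ((⌊r⌋ : ℝ) + 1) = 2 * (2:ℝ) ^ ((⌊r⌋:ℝ)) := by
      rw [Real.rpow_add (by norm_num : (0:ℝ) < 2), Real.rpow_one]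
      ring
    rw [h4] at h2
    have := mul_lt_mul_of_pos_right h2 hB
    rw [← Real.rpow_intCast (2:ℝ) ⌊r⌋]
    calc b = (b / B) * B := by field_simp
      _ < 2 * (2:ℝ) ^ ((⌊r⌋:ℝ)) * B := this
      _ = 2 * ((2:ℝ) ^ ((⌊r⌋:ℝ)) * B) := by ring

/-- There is a POT value in `[b, 2b)`. -/
lemma exists_pot_up {B b : ℝ} (hB : 0 < B) (hb : 0 < b) :
    ∃ m, IsPOT B m ∧ b ≤ m ∧ m < 2 * b := by
  set r := Real.logb 2 (b / B) with hr
  refine ⟨(2:ℝ) ^ (⌈r⌉) * B, ⟨⌈r⌉, rfl⟩, ?_, ?_⟩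
  · have h1 : r ≤ ((⌈r⌉ : ℝ)) := Int.le_ceil r
    have h2 : (2:ℝ) ^ r ≤ (2:ℝ) ^ ((⌈r⌉ : ℝ)) :=
      Real.rpow_le_rpow_left_iff (by norm_num : (1:ℝ) < 2) |>.2 h1
    have h3 : (2:ℝ) ^ r = b / B := Real.rpow_logb (by norm_num) (by norm_num) (by positivity)
    rw [h3] at h2
    rw [← Real.rpow_intCast (2:ℝ) ⌈r⌉]
    calc b = (b / B) * B := by field_simp
      _ ≤ (2:ℝ) ^ ((⌈r⌉:ℝ)) * B := mul_le_mul_of_nonneg_right h2 (le_of_lt hB)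
  · have h1 : ((⌈r⌉ : ℝ)) < r + 1 := by
      have := Int.ceil_lt_add_one r
      exact_mod_cast this
    have h2 : (2:ℝ) ^ ((⌈r⌉:ℝ)) < (2:ℝ) ^ (r + 1) :=
      Real.rpow_lt_rpow_left_iff (by norm_num : (1:ℝ) < 2) |>.2 h1
    have h3 : (2:ℝ) ^ (r + 1) = 2 * (b / B) := by
      rw [Real.rpow_add (by norm_num : (0:ℝ) < 2), Real.rpow_one,
        Real.rpow_logb (by norm_num) (by norm_num) (by positivity)]
      ring
    rw [h3] at h2
    have := mul_lt_mul_of_pos_right h2 hB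
    rw [← Real.rpow_intCast (2:ℝ) ⌈r⌉]
    calc (2:ℝ) ^ ((⌈r⌉:ℝ)) * B < 2 * (b / B) * B := this
      _ = 2 * b := by field_simp

/-- POT values in a positive window form a finite set. -/
lemma pot_finite {B : ℝ} (hB : 0 < B) {ε M : ℝ} (hε : 0 < ε) :
    {t : ℝ | IsPOT B t ∧ ε ≤ t ∧ t ≤ M}.Finite := by
  apply Set.Finite.subset (Set.Finite.image (fun z : ℤ => (2:ℝ) ^ z * B)
    (Set.finite_Icc ⌈Real.logb 2 (ε / B)⌉ ⌊Real.logb 2 (M / B)⌋))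
  rintro t ⟨⟨z, rfl⟩, h1, h2⟩
  refine ⟨z, ⟨?_, ?_⟩, rfl⟩
  · rw [Int.ceil_le]
    have h1' : ε / B ≤ (2:ℝ) ^ ((z:ℝ)) := by
      rw [Real.rpow_intCast, div_le_iff₀ hB]
      exact h1
    exact (Real.logb_le_iff_le_rpow (by norm_num) (by positivity)).2 h1'
  · rw [Int.le_floor]
    have hpos : (0:ℝ) < (2:ℝ) ^ z * B := by positivity
    have h2' : (2:ℝ) ^ ((z:ℝ)) ≤ M / B := by
      rw [Real.rpow_intCast, le_div_iff₀ hB]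
      exact h2
    exact (Real.le_logb_iff_rpow_le (by norm_num) (div_pos (lt_of_lt_of_le hpos h2) hB)).2 h2'

end JRP
end
noncomputable section
namespace JRP

open Finset

variable {n : ℕ}

/-- `sval` is attained at a nonempty subset and is a lower bound. -/
lemma sval_spec (hn : 0 < n) (K0 : ℝ) (K H : Fin n → ℝ) :
    (∃ S : Finset (Fin n), S.Nonempty ∧
      sval n K0 K H = (K0 + ∑ i ∈ S, K i) / ∑ i ∈ S, H i) ∧
    ∀ S : Finset (Fin n), S.Nonempty →
      sval n K0 K H ≤ (K0 + ∑ i ∈ S, K i) / ∑ i ∈ S, H i := by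
  set f : Finset (Fin n) → ℝ := fun S => (K0 + ∑ i ∈ S, K i) / ∑ i ∈ S, H i with hf
  have hfin : (f '' {S | S.Nonempty}).Finite := Set.Finite.image _ (Set.toFinite _)
  have hne : (f '' {S | S.Nonempty}).Nonempty :=
    ⟨f {⟨0, hn⟩}, ⟨{⟨0, hn⟩}, Finset.singleton_nonempty _, rfl⟩⟩
  constructor
  · have := Set.Nonempty.csInf_mem hne hfin
    obtain ⟨S, hS, hSe⟩ := this
    exact ⟨S, hS, hSe.symm⟩
  · intro S hS
    exact csInf_le hfin.bddBelow ⟨S, hS, rfl⟩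

lemma sval_pos (hn : 0 < n) {B K0 : ℝ} {K H : Fin n → ℝ}
    (hK0 : 0 < K0) (hK : ∀ i, 0 ≤ K i) (hH : ∀ i, 0 < H i) :
    0 < sval n K0 K H := by
  obtain ⟨⟨S, hS, hSe⟩, -⟩ := sval_spec hn K0 K H
  rw [hSe]
  apply div_pos
  · have : (0:ℝ) ≤ ∑ i ∈ S, K i := Finset.sum_nonneg (fun i _ => hK i)
    linarith
  · exact Finset.sum_pos (fun i _ => hH i) hS

/-- The set `U` of small retailers is nonempty and covers the major setup cost. -/
lemma U_good (hn : 0 < n) {K0 : ℝ} {K H : Fin n → ℝ}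
    (hK0 : 0 < K0) (hK : ∀ i, 0 ≤ K i) (hH : ∀ i, 0 < H i) :
    (Finset.univ.filter (fun k => K k ≤ sval n K0 K H * H k)).Nonempty ∧
    K0 ≤ sval n K0 K H *
      (∑ k ∈ Finset.univ.filter (fun k => K k ≤ sval n K0 K H * H k), H k) -
      (∑ k ∈ Finset.univ.filter (fun k => K k ≤ sval n K0 K H * H k), K k) := by
  obtain ⟨⟨S, hS, hSe⟩, hle⟩ := sval_spec hn K0 K H
  set s := sval n K0 K H with hs
  have hSH : 0 < ∑ i ∈ S, H i := Finset.sum_pos (fun i _ => hH i) hS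
  have hSeq : s * ∑ i ∈ S, H i = K0 + ∑ i ∈ S, K i := by
    rw [hSe]; field_simp
  have hsub : S ⊆ Finset.univ.filter (fun k => K k ≤ s * H k) := by
    intro k hk
    rw [Finset.mem_filter]
    refine ⟨Finset.mem_univ k, ?_⟩
    by_contra hgt
    push_neg at hgt
    by_cases hS' : (S.erase k).Nonempty
    · have h1 := hle (S.erase k) hS'
      have hSH' : 0 < ∑ i ∈ S.erase k, H i := Finset.sum_pos (fun i _ => hH i) hS'
      have h2 : s * ∑ i ∈ S.erase k, H i ≤ K0 + ∑ i ∈ S.erase k, K i := by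
        rw [← le_div_iff₀ hSH'] at *
        exact h1
      have hHsplit : ∑ i ∈ S, H i = ∑ i ∈ S.erase k, H i + H k := by
        rw [Finset.sum_erase_add _ _ hk]
      have hKsplit : ∑ i ∈ S, K i = ∑ i ∈ S.erase k, K i + K k := by
        rw [Finset.sum_erase_add _ _ hk]
      have e : s * ∑ i ∈ S, H i = s * ∑ i ∈ S.erase k, H i + s * H k := by
        rw [hHsplit]; ring
      linarith
    · rw [Finset.not_nonempty_iff_eq_empty] at hS'
      have hSk : S = {k} := by
        apply Finset.eq_singleton_iff_unique_mem.2
        refine ⟨hk, fun x hx => ?_⟩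
        by_contra hxk
        exact absurd (Finset.mem_erase.2 ⟨hxk, hx⟩) (by rw [hS']; simp)
      rw [hSk] at hSeq
      simp only [Finset.sum_singleton] at hSeq
      nlinarith
  constructor
  · exact hS.mono hsub
  · have hterm : ∀ k ∈ (Finset.univ.filter (fun k => K k ≤ s * H k)) \ S,
        0 ≤ s * H k - K k := by
      intro k hk
      have := (Finset.mem_filter.1 (Finset.mem_sdiff.1 hk).1).2
      linarith
    have hsum : ∑ k ∈ S, (s * H k - K k)
        ≤ ∑ k ∈ Finset.univ.filter (fun k => K k ≤ s * H k), (s * H k - K k) :=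
      Finset.sum_le_sum_of_subset_of_nonneg hsub (fun k h1 h2 =>
        hterm k (Finset.mem_sdiff.2 ⟨h1, h2⟩))
    have hSsum : ∑ k ∈ S, (s * H k - K k) = K0 := by
      rw [Finset.sum_sub_distrib, ← Finset.mul_sum]
      linarith [hSeq]
    have hUsum : ∑ k ∈ Finset.univ.filter (fun k => K k ≤ s * H k), (s * H k - K k)
        = s * (∑ k ∈ Finset.univ.filter (fun k => K k ≤ s * H k), H k)
          - ∑ k ∈ Finset.univ.filter (fun k => K k ≤ s * H k), K k := by
      rw [Finset.sum_sub_distrib, ← Finset.mul_sum]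
    rw [Finset.sum_sub_distrib, ← Finset.mul_sum] at hsum
    linarith

/-! ### potRound facts -/

lemma potRound_isPOT (B b : ℝ) : IsPOT B (potRound B b) := ⟨_, rfl⟩

lemma potRound_pos {B : ℝ} (hB : 0 < B) (b : ℝ) : 0 < potRound B b := by
  rw [potRound]; positivity

lemma potRound_ge {B b : ℝ} (hB : 0 < B) (hb : 0 < b) :
    b / Real.sqrt 2 ≤ potRound B b := by
  set r := Real.logb 2 (b / B) with hr
  have h1 : r - 1/2 < (round r : ℝ) := sub_half_lt_round r
  have h2 : (2:ℝ) ^ (r - 1/2) ≤ (2:ℝ) ^ ((round r : ℝ)) :=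
    (Real.rpow_le_rpow_left_iff (by norm_num : (1:ℝ) < 2)).2 (le_of_lt h1)
  have h3 : (2:ℝ) ^ (r - 1/2) = (b / B) / Real.sqrt 2 := by
    rw [Real.rpow_sub (by norm_num : (0:ℝ) < 2),
      Real.rpow_logb (by norm_num) (by norm_num) (by positivity),
      Real.sqrt_eq_rpow]
  rw [h3] at h2
  rw [potRound, ← Real.rpow_intCast (2:ℝ) (round r)]
  have := mul_le_mul_of_nonneg_right h2 (le_of_lt hB)
  calc b / Real.sqrt 2 = (b / B / Real.sqrt 2) * B := by field_simp
    _ ≤ (2:ℝ) ^ ((round r : ℝ)) * B := by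
        calc (b / B / Real.sqrt 2) * B = (b / B) / Real.sqrt 2 * B := by ring
          _ ≤ (2:ℝ) ^ ((round r : ℝ)) * B := this

lemma potRound_mono {B : ℝ} (hB : 0 < B) {b b' : ℝ} (hb : 0 < b) (hbb : b ≤ b') :
    potRound B b ≤ potRound B b' := by
  unfold potRound
  have hlog : Real.logb 2 (b / B) ≤ Real.logb 2 (b' / B) :=
    Real.logb_le_logb_of_le (by norm_num) (by positivity)
      ((div_le_div_iff_of_pos_right hB).2 hbb)
  have hround : round (Real.logb 2 (b / B)) ≤ round (Real.logb 2 (b' / B)) := by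
    rw [round_eq, round_eq]
    exact Int.floor_mono (by linarith)
  have : (2:ℝ) ^ (round (Real.logb 2 (b / B))) ≤ (2:ℝ) ^ (round (Real.logb 2 (b' / B))) :=
    zpow_le_zpow_right₀ (by norm_num : (1:ℝ) ≤ 2) hround
  exact mul_le_mul_of_nonneg_right this (le_of_lt hB)

end JRP
end
noncomputable section
namespace JRP

open Finset

variable {n : ℕ}

theorem exists_NE_le (hn : 0 < n) (B K0 : ℝ) (K H : Fin n → ℝ)
    (hB : 0 < B) (hK0 : 0 < K0) (hK : ∀ i, 0 ≤ K i) (hH : ∀ i, 0 < H i)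
    (P : Fin n → ℝ) (hPmem : ∀ j, InStrategy B K0 (K j) (H j) (P j))
    (hcond : ∀ j, K j + K0 * H j / Wsum H P (P j) ≤ 2 * H j * (P j) ^ 2) :
    ∃ T, IsNE B K0 K H H T ∧ ∀ j, T j ≤ P j := by
  have hne' : Nonempty (Fin n) := ⟨⟨0, hn⟩⟩
  have hPpos : ∀ j, 0 < P j := fun j => pot_pos hB (hPmem j).1
  -- choose the floor ε
  set c : ℝ := Finset.univ.inf' Finset.univ_nonempty
      (fun j => min (P j / 2) (Real.sqrt (K0 / H j) / 2)) with hc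
  have hcpos : 0 < c := by
    rw [hc, Finset.lt_inf'_iff]
    intro j _
    have h1 : 0 < P j / 2 := by linarith [hPpos j]
    have h2 : 0 < Real.sqrt (K0 / H j) / 2 := by
      have : 0 < K0 / H j := div_pos hK0 (hH j)
      positivity
    exact lt_min h1 h2
  have hcle : ∀ j, c ≤ min (P j / 2) (Real.sqrt (K0 / H j) / 2) := fun j =>
    Finset.inf'_le _ (Finset.mem_univ j)
  obtain ⟨ε, hεPOT, hεc, hcε⟩ := exists_pot_le hB hcpos
  have hεpos : 0 < ε := pot_pos hB hεPOT
  have hεP : ∀ j, 2 * ε ≤ P j := by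
    intro j
    have := le_trans hεc (le_trans (hcle j) (min_le_left _ _))
    linarith
  have hεPle : ∀ j, ε ≤ P j := fun j => by linarith [hεP j, hεpos]
  have hεsmall : ∀ (j : Fin n) (t : ℝ), 0 < t → t ≤ ε → 2 * H j * t ^ 2 < K0 := by
    intro j t ht htε
    have h1 : t ≤ Real.sqrt (K0 / H j) / 2 :=
      le_trans htε (le_trans hεc (le_trans (hcle j) (min_le_right _ _)))
    have h2 : Real.sqrt (K0 / H j) ^ 2 = K0 / H j :=
      Real.sq_sqrt (le_of_lt (div_pos hK0 (hH j)))
    have h3 : t ^ 2 ≤ (Real.sqrt (K0 / H j) / 2) ^ 2 := by nlinarith [ht, h1]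
    have h4 : (Real.sqrt (K0 / H j) / 2) ^ 2 = (K0 / H j) / 4 := by
      rw [div_pow, h2]; norm_num
    rw [h4] at h3
    have h5 : 2 * H j * t ^ 2 ≤ 2 * H j * ((K0 / H j) / 4) :=
      mul_le_mul_of_nonneg_left h3 (by linarith [hH j])
    have h6 : 2 * H j * ((K0 / H j) / 4) = K0 / 2 := by
      have hne0 : H j ≠ 0 := ne_of_gt (hH j)
      field_simp
      ring_nf
    rw [h6] at h5
    linarith
  -- doubling domination below the floor
  have dbl : ∀ m : ℕ, ∀ (Q : Fin n → ℝ) (j : Fin n) (u : ℝ),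
      (∀ k, ε ≤ Q k) → IsPOT B u → 0 < u → u * 2 ^ m = ε →
      indCost K0 K H H (Function.update Q j ε) j
        ≤ indCost K0 K H H (Function.update Q j u) j := by
    intro m
    induction m with
    | zero =>
      intro Q j u _ _ _ heq
      rw [pow_zero, mul_one] at heq
      rw [← heq]
    | succ m ih =>
      intro Q j u hQε hPOT hupos heq
      have h2 : (2 * u) * 2 ^ m = ε := by rw [← heq]; ring
      have h2m : (1:ℝ) ≤ 2 ^ m := one_le_pow₀ (by norm_num : (1:ℝ) ≤ 2)
      have h2uε : 2 * u ≤ ε := by nlinarith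
      have hdesc := floor_desc K0 K H hK0 hH hK Q j hupos
        (fun k _ => le_trans h2uε (hQε k))
        (hεsmall j u hupos (by linarith))
      exact le_trans (ih Q j (2 * u) hQε (pot_double hPOT) (by linarith) h2)
        (le_of_lt hdesc)
  have chain : ∀ (Q : Fin n → ℝ) (j : Fin n) (u : ℝ),
      (∀ k, ε ≤ Q k) → IsPOT B u → u < ε →
      indCost K0 K H H (Function.update Q j ε) j
        ≤ indCost K0 K H H (Function.update Q j u) j := by
    intro Q j u hQε hPOT huε
    obtain ⟨a, rfl⟩ := hPOT
    obtain ⟨e, he⟩ := hεPOT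
    have hupos : (0:ℝ) < 2 ^ a * B := by positivity
    have hae : a < e := by
      by_contra hc'
      push_neg at hc'
      have : (2:ℝ) ^ e ≤ 2 ^ a := zpow_le_zpow_right₀ (by norm_num : (1:ℝ) ≤ 2) hc'
      have : (2:ℝ) ^ e * B ≤ 2 ^ a * B := mul_le_mul_of_nonneg_right this (le_of_lt hB)
      rw [← he] at this
      linarith
    set m := (e - a).toNat with hm
    have hmz : ((m : ℕ) : ℤ) = e - a := Int.toNat_of_nonneg (by omega)
    have hpow : (2:ℝ) ^ a * (2:ℝ) ^ ((m : ℕ) : ℤ) = 2 ^ e := by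
      rw [hmz, ← zpow_add₀ (by norm_num : (2:ℝ) ≠ 0)]
      congr 1
      omega
    have heq : (2 ^ a * B) * 2 ^ m = ε := by
      calc (2 ^ a * B) * 2 ^ m = ((2:ℝ) ^ a * (2:ℝ) ^ ((m : ℕ) : ℤ)) * B := by
            rw [zpow_natCast]; ring
        _ = 2 ^ e * B := by rw [hpow]
        _ = ε := he.symm
    exact dbl m Q j _ hQε ⟨a, rfl⟩ hupos heq
  -- finite candidate sets
  have hCfin : ∀ j : Fin n, {t : ℝ | InStrategy B K0 (K j) (H j) t ∧ ε ≤ t}.Finite := by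
    intro j
    apply (pot_finite hB hεpos (M := Real.sqrt (2 * (K0 + K j) / H j))).subset
    rintro t ⟨h1, h2⟩
    exact ⟨h1.1, h2, h1.2.2⟩
  -- full best responses
  have getBR : ∀ (Q : Fin n → ℝ), (∀ k, ε ≤ Q k) → ∀ j, ∃ b,
      (InStrategy B K0 (K j) (H j) b ∧ ε ≤ b) ∧
      ∀ u, InStrategy B K0 (K j) (H j) u →
        indCost K0 K H H (Function.update Q j b) j
          ≤ indCost K0 K H H (Function.update Q j u) j := by
    intro Q hQε j
    obtain ⟨b, hbmem, hbmin⟩ := Finset.exists_min_image (hCfin j).toFinset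
      (fun t => indCost K0 K H H (Function.update Q j t) j)
      ⟨P j, (Set.Finite.mem_toFinset _).2 ⟨hPmem j, hεPle j⟩⟩
    rw [Set.Finite.mem_toFinset] at hbmem
    refine ⟨b, hbmem, ?_⟩
    intro u hu
    rcases le_or_gt ε u with hεu | huε
    · exact hbmin u ((Set.Finite.mem_toFinset _).2 ⟨hu, hεu⟩)
    · have hchain := chain Q j u hQε hu.1 huε
      have hεmem : InStrategy B K0 (K j) (H j) ε :=
        ⟨hεPOT, le_trans hu.2.1 (le_of_lt huε),
          le_trans (hεPle j) (hPmem j).2.2⟩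
      exact le_trans (hbmin ε ((Set.Finite.mem_toFinset _).2 ⟨hεmem, le_refl ε⟩)) hchain
  -- capped best responses at the initial profile
  have getBRinit : ∀ j, ∃ b,
      InStrategy B K0 (K j) (H j) b ∧ ε ≤ b ∧ b ≤ P j ∧
      ∀ u, InStrategy B K0 (K j) (H j) u →
        indCost K0 K H H (Function.update P j b) j
          ≤ indCost K0 K H H (Function.update P j u) j := by
    intro j
    have hSfin : {t : ℝ | InStrategy B K0 (K j) (H j) t ∧ ε ≤ t ∧ t ≤ P j}.Finite :=
      (hCfin j).subset (fun t ht => ⟨ht.1, ht.2.1⟩)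
    obtain ⟨b, hbmem, hbmin⟩ := Finset.exists_min_image hSfin.toFinset
      (fun t => indCost K0 K H H (Function.update P j t) j)
      ⟨P j, (Set.Finite.mem_toFinset _).2 ⟨hPmem j, hεPle j, le_refl _⟩⟩
    rw [Set.Finite.mem_toFinset] at hbmem
    refine ⟨b, hbmem.1, hbmem.2.1, hbmem.2.2, ?_⟩
    intro u hu
    have hPmemS : P j ∈ hSfin.toFinset :=
      (Set.Finite.mem_toFinset _).2 ⟨hPmem j, hεPle j, le_refl _⟩
    rcases le_or_gt u (P j) with huP | hPu
    · rcases le_or_gt ε u with hεu | huε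
      · exact hbmin u ((Set.Finite.mem_toFinset _).2 ⟨hu, hεu, huP⟩)
      · have hchain := chain P j u hεPle hu.1 huε
        have hεmem : InStrategy B K0 (K j) (H j) ε :=
          ⟨hεPOT, le_trans hu.2.1 (le_of_lt huε),
            le_trans (hεPle j) (hPmem j).2.2⟩
        exact le_trans (hbmin ε ((Set.Finite.mem_toFinset _).2
          ⟨hεmem, le_refl ε, hεPle j⟩)) hchain
    · have h2 : 2 * P j ≤ u := pot_step hB (hPmem j).1 hu.1 hPu
      have hup := up_stable K0 K H hK0 hH hK P j hPpos h2 (hcond j)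
      have hPj : Function.update P j (P j) = P := Function.update_eq_self j P
      have hb := hbmin (P j) hPmemS
      simp only [hPj] at hb
      exact le_trans hb hup
  -- the invariant set
  set Φ : (Fin n → ℝ) → Prop := fun Q =>
    (∀ k, InStrategy B K0 (K k) (H k) (Q k)) ∧ (∀ k, ε ≤ Q k) ∧ (∀ k, Q k ≤ P k) ∧
    (∀ k, ∃ b, InStrategy B K0 (K k) (H k) b ∧ ε ≤ b ∧ b ≤ Q k ∧
      ∀ u, InStrategy B K0 (K k) (H k) u →
        indCost K0 K H H (Function.update Q k b) k
          ≤ indCost K0 K H H (Function.update Q k u) k) with hΦ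
  have hAfin : {Q | Φ Q}.Finite := by
    apply Set.Finite.subset (Set.Finite.pi (fun j : Fin n => hCfin j))
    intro Q hQ
    rw [Set.mem_pi]
    intro j _
    exact ⟨hQ.1 j, hQ.2.1 j⟩
  have hAne : Φ P := by
    refine ⟨hPmem, hεPle, fun k => le_refl _, ?_⟩
    intro k
    obtain ⟨b, h1, h2, h3, h4⟩ := getBRinit k
    exact ⟨b, h1, h2, h3, h4⟩
  obtain ⟨Pstar, hPstarA, hmin⟩ := Set.exists_min_image {Q | Φ Q}
    (fun Q => ∑ k, Q k) hAfin ⟨P, hAne⟩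
  have hΦstar : Φ Pstar := hPstarA
  obtain ⟨hmem', hεle', hlePstar, hwit⟩ := hΦstar
  choose b hb1 hb2 hb3 hb4 using hwit
  by_cases hfix : ∀ k, b k = Pstar k
  · -- Pstar is the desired NE
    refine ⟨Pstar, ⟨hmem', ?_⟩, hlePstar⟩
    intro i t ht
    have := hb4 i t ht
    rw [hfix i, Function.update_eq_self] at this
    exact this
  · push_neg at hfix
    obtain ⟨j, hj⟩ := hfix
    have hjlt : b j < Pstar j := lt_of_le_of_ne (hb3 j) hj
    exfalso
    set Q' : Fin n → ℝ := Function.update Pstar j (b j) with hQ'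
    have hQ'le : ∀ m, Q' m ≤ Pstar m := by
      intro m
      by_cases hm : m = j
      · subst hm; rw [hQ', Function.update_self]; exact hb3 m
      · rw [hQ', Function.update_of_ne hm]
    have hQ'pos : ∀ m, ε ≤ Q' m := by
      intro m
      by_cases hm : m = j
      · subst hm; rw [hQ', Function.update_self]; exact hb2 m
      · rw [hQ', Function.update_of_ne hm]; exact hεle' m
    have hΦQ' : Φ Q' := by
      refine ⟨?_, hQ'pos, ?_, ?_⟩
      · intro m
        by_cases hm : m = j
        · subst hm; rw [hQ', Function.update_self]; exact hb1 m
        · rw [hQ', Function.update_of_ne hm]; exact hmem' m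
      · intro m; exact le_trans (hQ'le m) (hlePstar m)
      · intro k
        by_cases hk : k = j
        · subst hk
          refine ⟨b k, hb1 k, hb2 k, by rw [hQ', Function.update_self], ?_⟩
          intro u hu
          have hupd : ∀ x : ℝ, Function.update Q' k x = Function.update Pstar k x := by
            intro x
            rw [hQ', Function.update_idem]
          rw [hupd (b k), hupd u]
          exact hb4 k u hu
        · obtain ⟨b', ⟨hb'1, hb'2⟩, hb'4⟩ := getBR Q' hQ'pos k
          rcases le_or_gt b' (b k) with hbb | hbb
          · refine ⟨b', hb'1, hb'2, ?_, hb'4⟩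
            calc b' ≤ b k := hbb
              _ ≤ Pstar k := hb3 k
              _ = Q' k := by rw [hQ', Function.update_of_ne hk]
          · refine ⟨b k, hb1 k, hb2 k, ?_, ?_⟩
            · calc b k ≤ Pstar k := hb3 k
                _ = Q' k := by rw [hQ', Function.update_of_ne hk]
            · intro u hu
              have hbpos : 0 < b k := pot_pos hB (hb1 k).1
              have hstar : indCost K0 K H H (Function.update Pstar k (b k)) k
                  ≤ indCost K0 K H H (Function.update Pstar k b') k :=
                hb4 k b' hb'1
              have htrans := pref_mono K0 K H (le_of_lt hK0) hH k hQ'le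
                hbpos (le_of_lt hbb) hstar
              exact le_trans htrans (hb'4 u hu)
    have hsum : ∑ k, Q' k < ∑ k, Pstar k := by
      rw [hQ', Finset.sum_update_of_mem (Finset.mem_univ j)]
      rw [← Finset.add_sum_erase _ _ (Finset.mem_univ j)]
      have : ∑ k ∈ Finset.univ.erase j, Pstar k
          = ∑ k ∈ Finset.univ \ {j}, Pstar k := by
        rw [Finset.sdiff_singleton_eq_erase]
      linarith [hjlt, this]
    exact absurd (hmin Q' hΦQ') (not_le.2 hsum)

end JRP
end
noncomputable section
namespace JRP

open Finset

variable {n : ℕ}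

/-- Deterministic round-up to a POT value. -/
def potUp (B b : ℝ) : ℝ := (2:ℝ) ^ (⌈Real.logb 2 (b / B)⌉ : ℤ) * B

/-- Deterministic round-down to a POT value. -/
def potLe (B b : ℝ) : ℝ := (2:ℝ) ^ (⌊Real.logb 2 (b / B)⌋ : ℤ) * B

lemma potUp_isPOT (B b : ℝ) : IsPOT B (potUp B b) := ⟨_, rfl⟩
lemma potLe_isPOT (B b : ℝ) : IsPOT B (potLe B b) := ⟨_, rfl⟩

lemma potUp_spec {B b : ℝ} (hB : 0 < B) (hb : 0 < b) :
    b ≤ potUp B b ∧ potUp B b < 2 * b := by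
  set r := Real.logb 2 (b / B) with hr
  constructor
  · have h1 : r ≤ ((⌈r⌉ : ℝ)) := Int.le_ceil r
    have h2 : (2:ℝ) ^ r ≤ (2:ℝ) ^ ((⌈r⌉ : ℝ)) :=
      (Real.rpow_le_rpow_left_iff (by norm_num : (1:ℝ) < 2)).2 h1
    have h3 : (2:ℝ) ^ r = b / B := Real.rpow_logb (by norm_num) (by norm_num) (by positivity)
    rw [h3] at h2
    rw [potUp, ← Real.rpow_intCast (2:ℝ) ⌈r⌉]
    calc b = (b / B) * B := by field_simp
      _ ≤ (2:ℝ) ^ ((⌈r⌉:ℝ)) * B := mul_le_mul_of_nonneg_right h2 (le_of_lt hB)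
  · have h1 : ((⌈r⌉ : ℝ)) < r + 1 := by
      have := Int.ceil_lt_add_one r
      exact_mod_cast this
    have h2 : (2:ℝ) ^ ((⌈r⌉:ℝ)) < (2:ℝ) ^ (r + 1) :=
      (Real.rpow_lt_rpow_left_iff (by norm_num : (1:ℝ) < 2)).2 h1
    have h3 : (2:ℝ) ^ (r + 1) = 2 * (b / B) := by
      rw [Real.rpow_add (by norm_num : (0:ℝ) < 2), Real.rpow_one,
        Real.rpow_logb (by norm_num) (by norm_num) (by positivity)]
      ring
    rw [h3] at h2
    have := mul_lt_mul_of_pos_right h2 hB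
    rw [potUp, ← Real.rpow_intCast (2:ℝ) ⌈r⌉]
    calc (2:ℝ) ^ ((⌈r⌉:ℝ)) * B < 2 * (b / B) * B := this
      _ = 2 * b := by field_simp

lemma potLe_spec {B b : ℝ} (hB : 0 < B) (hb : 0 < b) :
    potLe B b ≤ b ∧ b < 2 * potLe B b := by
  set r := Real.logb 2 (b / B) with hr
  constructor
  · have h1 : ((⌊r⌋ : ℝ)) ≤ r := Int.floor_le r
    have h2 : (2:ℝ) ^ ((⌊r⌋ : ℝ)) ≤ (2:ℝ) ^ r :=
      (Real.rpow_le_rpow_left_iff (by norm_num : (1:ℝ) < 2)).2 h1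
    have h3 : (2:ℝ) ^ r = b / B := Real.rpow_logb (by norm_num) (by norm_num) (by positivity)
    rw [h3] at h2
    rw [potLe, ← Real.rpow_intCast (2:ℝ) ⌊r⌋]
    calc (2:ℝ) ^ ((⌊r⌋:ℝ)) * B ≤ (b / B) * B :=
          mul_le_mul_of_nonneg_right h2 (le_of_lt hB)
      _ = b := by field_simp
  · have h1 : r < (⌊r⌋ : ℝ) + 1 := Int.lt_floor_add_one r
    have h2 : (2:ℝ) ^ r < (2:ℝ) ^ ((⌊r⌋ : ℝ) + 1) :=
      (Real.rpow_lt_rpow_left_iff (by norm_num : (1:ℝ) < 2)).2 h1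
    have h3 : (2:ℝ) ^ r = b / B := Real.rpow_logb (by norm_num) (by norm_num) (by positivity)
    rw [h3] at h2
    have h4 : (2:ℝ) ^ ((⌊r⌋ : ℝ) + 1) = 2 * (2:ℝ) ^ ((⌊r⌋:ℝ)) := by
      rw [Real.rpow_add (by norm_num : (0:ℝ) < 2), Real.rpow_one]
      ring
    rw [h4] at h2
    have := mul_lt_mul_of_pos_right h2 hB
    rw [potLe, ← Real.rpow_intCast (2:ℝ) ⌊r⌋]
    calc b = (b / B) * B := by field_simp
      _ < 2 * (2:ℝ) ^ ((⌊r⌋:ℝ)) * B := this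
      _ = 2 * ((2:ℝ) ^ ((⌊r⌋:ℝ)) * B) := by ring

lemma potUp_mono {B : ℝ} (hB : 0 < B) {b b' : ℝ} (hb : 0 < b) (h : b ≤ b') :
    potUp B b ≤ potUp B b' := by
  have hlog : Real.logb 2 (b / B) ≤ Real.logb 2 (b' / B) :=
    Real.logb_le_logb_of_le (by norm_num) (by positivity) ((div_le_div_iff_of_pos_right hB).2 h)
  exact mul_le_mul_of_nonneg_right
    (zpow_le_zpow_right₀ (by norm_num : (1:ℝ) ≤ 2) (Int.ceil_le_ceil hlog))
    (le_of_lt hB)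

lemma potUp_pos {B : ℝ} (hB : 0 < B) (b : ℝ) : 0 < potUp B b := by
  rw [potUp]; positivity

lemma potLe_pos {B : ℝ} (hB : 0 < B) (b : ℝ) : 0 < potLe B b := by
  rw [potLe]; positivity

/-- Construction of a profile that is stable against upward deviations and sits
below twice the target values. -/
lemma construct_P (hn : 0 < n) (B K0 : ℝ) (K H : Fin n → ℝ)
    (hB : 0 < B) (hK0 : 0 < K0) (hK : ∀ i, 0 ≤ K i) (hH : ∀ i, 0 < H i) :
    ∃ P : Fin n → ℝ, (∀ j, InStrategy B K0 (K j) (H j) (P j)) ∧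
      (∀ j, K j + K0 * H j / Wsum H P (P j) ≤ 2 * H j * (P j) ^ 2) ∧
      ∀ j, P j < 2 * max (Real.sqrt (sval n K0 K H)) (Real.sqrt (K j / H j)) := by
  set s := sval n K0 K H with hs
  have hspos : 0 < s := sval_pos hn hK0 hK hH (B := B)
  set aval : Fin n → ℝ := fun j => max (Real.sqrt s) (Real.sqrt (K j / H j)) with haval
  have havaldef : ∀ j, aval j = max (Real.sqrt s) (Real.sqrt (K j / H j)) := fun j => rfl
  have havalpos : ∀ j, 0 < aval j := fun j =>
    lt_of_lt_of_le (Real.sqrt_pos.2 hspos) (le_max_left _ _)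
  set hi : Fin n → ℝ := fun j => Real.sqrt (2 * (K0 + K j) / H j) with hhi
  have hhidef : ∀ j, hi j = Real.sqrt (2 * (K0 + K j) / H j) := fun j => rfl
  have hhipos : ∀ j, 0 < hi j := by
    intro j
    rw [hhidef]
    apply Real.sqrt_pos.2
    have h1 := hK j
    have h2 := hH j
    positivity
  set P : Fin n → ℝ := fun j => min (potUp B (aval j)) (potLe B (hi j)) with hP
  have hPdef : ∀ j, P j = min (potUp B (aval j)) (potLe B (hi j)) := fun j => rfl
  have hhalf : ∀ j, hi j / 2 = Real.sqrt ((K0 + K j) / (2 * H j)) := by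
    intro j
    rw [hhidef]
    have h1 : 2 * (K0 + K j) / H j = 2 ^ 2 * ((K0 + K j) / (2 * H j)) := by
      field_simp
    rw [h1, Real.sqrt_mul (by norm_num : (0:ℝ) ≤ 2 ^ 2) _,
      Real.sqrt_sq (by norm_num : (0:ℝ) ≤ 2)]
    ring
  have hmem : ∀ j, InStrategy B K0 (K j) (H j) (P j) := by
    intro j
    have hup := potUp_spec hB (havalpos j)
    have hle := potLe_spec hB (hhipos j)
    refine ⟨?_, ?_, ?_⟩
    · rw [hPdef]
      rcases min_cases (potUp B (aval j)) (potLe B (hi j)) with ⟨h, -⟩ | ⟨h, -⟩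
      · rw [h]; exact potUp_isPOT B (aval j)
      · rw [h]; exact potLe_isPOT B (hi j)
    · have hKH : Real.sqrt (K j / (2 * H j)) ≤ Real.sqrt (K j / H j) := by
        apply Real.sqrt_le_sqrt
        have h1 : 0 < H j := hH j
        rw [div_le_div_iff₀ (by positivity) (by positivity)]
        nlinarith [hK j]
      rw [hPdef]
      rcases min_cases (potUp B (aval j)) (potLe B (hi j)) with ⟨h, -⟩ | ⟨h, -⟩
      · rw [h]
        calc Real.sqrt (K j / (2 * H j)) ≤ Real.sqrt (K j / H j) := hKH
          _ ≤ aval j := by rw [havaldef]; exact le_max_right _ _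
          _ ≤ potUp B (aval j) := hup.1
      · rw [h]
        have hlo : Real.sqrt (K j / (2 * H j)) ≤ hi j / 2 := by
          rw [hhalf j]
          apply Real.sqrt_le_sqrt
          have h2 : (0:ℝ) < 2 * H j := by linarith [hH j]
          exact (div_le_div_iff_of_pos_right h2).2 (by linarith [hK0])
        calc Real.sqrt (K j / (2 * H j)) ≤ hi j / 2 := hlo
          _ ≤ potLe B (hi j) := by linarith [hle.2]
    · rw [← hhidef j]
      calc P j ≤ potLe B (hi j) := by rw [hPdef]; exact min_le_right _ _
        _ ≤ hi j := hle.1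
  have hWj : ∀ j, H j ≤ Wsum H P (P j) := fun j => Wsum_le_point hH (le_refl (P j))
  have hcond : ∀ j, K j + K0 * H j / Wsum H P (P j) ≤ 2 * H j * (P j) ^ 2 := by
    intro j
    have hWpos : 0 < Wsum H P (P j) := lt_of_lt_of_le (hH j) (hWj j)
    rcases le_or_gt (potUp B (aval j)) (potLe B (hi j)) with hcase | hcase
    · -- uncapped : P j = potUp (aval j)
      have hPj : P j = potUp B (aval j) := by rw [hPdef]; exact min_eq_left hcase
      have hup := potUp_spec hB (havalpos j)
      have hPge : aval j ≤ P j := by rw [hPj]; exact hup.1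
      have hPsq : (aval j) ^ 2 ≤ (P j) ^ 2 := by nlinarith [havalpos j]
      obtain ⟨hUne, hUsum⟩ := U_good hn hK0 hK hH
      set U := Finset.univ.filter (fun k => K k ≤ s * H k) with hU
      have hUsub : U ⊆ Finset.univ.filter (fun k => P k ≤ P j) := by
        intro k hk
        rw [hU, Finset.mem_filter] at hk
        rw [Finset.mem_filter]
        refine ⟨Finset.mem_univ k, ?_⟩
        have havk : aval k = Real.sqrt s := by
          rw [havaldef]
          apply max_eq_left
          apply Real.sqrt_le_sqrt
          rw [div_le_iff₀ (hH k)]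
          linarith [hk.2]
        calc P k ≤ potUp B (aval k) := by rw [hPdef]; exact min_le_left _ _
          _ = potUp B (Real.sqrt s) := by rw [havk]
          _ ≤ potUp B (aval j) := potUp_mono hB (Real.sqrt_pos.2 hspos)
              (by rw [havaldef]; exact le_max_left _ _)
          _ = P j := hPj.symm
      have hWU : ∑ k ∈ U, H k ≤ Wsum H P (P j) :=
        Finset.sum_le_sum_of_subset_of_nonneg hUsub (fun k _ _ => (hH k).le)
      have hUpos : 0 < ∑ k ∈ U, H k := Finset.sum_pos (fun k _ => hH k) hUne
      have hKU : 0 ≤ ∑ k ∈ U, K k := Finset.sum_nonneg (fun k _ => hK k)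
      have h1 : K0 ≤ s * Wsum H P (P j) := by
        have h2 : s * (∑ k ∈ U, H k) ≤ s * Wsum H P (P j) :=
          mul_le_mul_of_nonneg_left hWU hspos.le
        linarith [hUsum]
      have hKoW : K0 * H j / Wsum H P (P j) ≤ s * H j := by
        rw [div_le_iff₀ hWpos]
        nlinarith [hH j]
      have hKj : K j ≤ H j * (aval j) ^ 2 := by
        have ha : Real.sqrt (K j / H j) ≤ aval j := by
          rw [havaldef]; exact le_max_right _ _
        have hsq : (Real.sqrt (K j / H j)) ^ 2 ≤ (aval j) ^ 2 :=
          pow_le_pow_left₀ (Real.sqrt_nonneg _) ha 2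
        rw [Real.sq_sqrt (div_nonneg (hK j) (hH j).le)] at hsq
        rw [div_le_iff₀ (hH j)] at hsq
        linarith
      have hsle : s ≤ (aval j) ^ 2 := by
        have ha : Real.sqrt s ≤ aval j := by rw [havaldef]; exact le_max_left _ _
        have hsq : (Real.sqrt s) ^ 2 ≤ (aval j) ^ 2 :=
          pow_le_pow_left₀ (Real.sqrt_nonneg _) ha 2
        rwa [Real.sq_sqrt hspos.le] at hsq
      nlinarith [hH j]
    · -- capped : P j = potLe (hi j)
      have hPj : P j = potLe B (hi j) := by rw [hPdef]; exact min_eq_right hcase.le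
      have hle := potLe_spec hB (hhipos j)
      have hPgt : hi j < 2 * P j := by rw [hPj]; exact hle.2
      have hhisq : (hi j) ^ 2 = 2 * (K0 + K j) / H j := by
        rw [hhidef]
        apply Real.sq_sqrt
        have h1 := hK j
        have h2 := hH j
        positivity
      have he : H j * (2 * (K0 + K j) / H j) = 2 * (K0 + K j) := by
        rw [mul_comm, div_mul_cancel₀ _ (ne_of_gt (hH j))]
      have hKoW : K0 * H j / Wsum H P (P j) ≤ K0 := by
        rw [div_le_iff₀ hWpos]
        nlinarith [hWj j, hK0]
      have h4 : hi j ^ 2 < (2 * P j) ^ 2 := by nlinarith [hhipos j, hPgt]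
      have h5 : H j * hi j ^ 2 < H j * (2 * P j) ^ 2 :=
        mul_lt_mul_of_pos_left h4 (hH j)
      rw [hhisq, he] at h5
      nlinarith [hKoW]
  exact ⟨P, hmem, hcond, fun j =>
    lt_of_le_of_lt (by rw [hPdef]; exact min_le_left _ _) (potUp_spec hB (havalpos j)).2⟩

end JRP
end
theorem statement11 {n : ℕ} (hn : 0 < n) (B K0 : ℝ) (K H : Fin n → ℝ)
    (hB : 0 < B) (hK0 : 0 < K0) (hK : ∀ i, 0 ≤ K i) (hH : ∀ i, 0 < H i)
    (Th : Fin n → ℝ) (hNE : IsNE B K0 K H H Th)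
    (hleast : ∀ T' : Fin n → ℝ, IsNE B K0 K H H T' → ∀ i, Th i ≤ T' i) :
    (∀ i, K i ≤ sval n K0 K H * H i → Th i = 2 * Tc n B K0 K H i →
      Tc n B K0 K H i = (⨅ j, Tc n B K0 K H j) ∧
      Real.sqrt (sval n K0 K H) / Real.sqrt 2 ≤ Tc n B K0 K H i ∧
      Tc n B K0 K H i < Real.sqrt (sval n K0 K H)) ∧
    (∀ i, ¬ K i ≤ sval n K0 K H * H i → Th i = 2 * Tc n B K0 K H i →
      Real.sqrt (K i / H i) / Real.sqrt 2 ≤ Tc n B K0 K H i ∧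
      Tc n B K0 K H i < Real.sqrt (K i / H i)) := by
  have hnefin : Nonempty (Fin n) := ⟨⟨0, hn⟩⟩
  have hspos : 0 < sval n K0 K H := JRP.sval_pos hn hK0 hK hH (B := B)
  have machine : ∀ i : Fin n,
      Th i = 2 * Tc n B K0 K H i →
      max (Real.sqrt (sval n K0 K H)) (Real.sqrt (K i / H i)) ≤ Tc n B K0 K H i →
      False := by
    intro i hThi htarget
    obtain ⟨P, hPmem, hPcond, hPlt⟩ := JRP.construct_P hn B K0 K H hB hK0 hK hH
    obtain ⟨T, hTNE, hTle⟩ := JRP.exists_NE_le hn B K0 K H hB hK0 hK hH P hPmem hPcond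
    have h1 : Th i ≤ T i := hleast T hTNE i
    have h2 := hTle i
    have h3 := hPlt i
    have h4 : 2 * max (Real.sqrt (sval n K0 K H)) (Real.sqrt (K i / H i)) ≤ Th i := by
      rw [hThi]; linarith
    linarith
  constructor
  · intro i hiU hThi
    have hKH : K i / H i ≤ sval n K0 K H := (div_le_iff₀ (hH i)).2 hiU
    have hsqle : Real.sqrt (K i / H i) ≤ Real.sqrt (sval n K0 K H) :=
      Real.sqrt_le_sqrt hKH
    have hmax : max (Real.sqrt (sval n K0 K H)) (Real.sqrt (K i / H i))
        = Real.sqrt (sval n K0 K H) := max_eq_left hsqle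
    have hTci : Tc n B K0 K H i = potRound B (Real.sqrt (sval n K0 K H)) := by
      rw [Tc, if_pos hiU]
    refine ⟨?_, ?_, ?_⟩
    · apply le_antisymm
      · apply le_ciInf
        intro j
        rw [hTci]
        rw [Tc]
        split_ifs with hj
        · exact le_refl _
        · push_neg at hj
          apply JRP.potRound_mono hB (Real.sqrt_pos.2 hspos)
          apply Real.sqrt_le_sqrt
          rw [le_div_iff₀ (hH j)]
          linarith
      · exact ciInf_le (Set.Finite.bddBelow (Set.finite_range _)) i
    · rw [hTci]
      exact JRP.potRound_ge hB (Real.sqrt_pos.2 hspos)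
    · by_contra hge
      push_neg at hge
      exact machine i hThi (by rw [hmax]; exact hge)
  · intro i hiV hThi
    have hiV' : sval n K0 K H * H i < K i := not_le.1 hiV
    have hKipos : 0 < K i := lt_trans (mul_pos hspos (hH i)) hiV'
    have hKHpos : 0 < K i / H i := div_pos hKipos (hH i)
    have hTci : Tc n B K0 K H i = potRound B (Real.sqrt (K i / H i)) := by
      rw [Tc, if_neg hiV]
    have hmax : max (Real.sqrt (sval n K0 K H)) (Real.sqrt (K i / H i))
        = Real.sqrt (K i / H i) := by
      apply max_eq_right
      apply Real.sqrt_le_sqrt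
      rw [le_div_iff₀ (hH i)]
      linarith
    constructor
    · rw [hTci]
      exact JRP.potRound_ge hB (Real.sqrt_pos.2 hKHpos)
    · by_contra hge
      push_neg at hge
      exact machine i hThi (by rw [hmax]; exact hge)
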